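/- With F, 𝒯, Q_d = (q_d, q_{d0}) as defined from the thrust extraction map, the associated rotation matrix satisfies R(Q_d)ᵀ z_I = (m/𝒯)(g z_I − F), i.e., the extracted quaternion realizes the virtual control: g z_I − (𝒯/m) R(Q_d)ᵀ z_I = F. -/

import Mathlib

open Matrix

def skew (x : Fin 3 → ℝ) : Matrix (Fin 3) (Fin 3) ℝ :=
  !![0, -x 2, x 1; x 2, 0, -x 0; -x 1, x 0, 0]

def Rmat (q : Fin 3 → ℝ) (q0 : ℝ) : Matrix (Fin 3) (Fin 3) ℝ :=
  (q0 ^ 2 - (q 0 ^ 2 + q 1 ^ 2 + q 2 ^ 2)) • (1 : Matrix (Fin 3) (Fin 3) ℝ)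
    + (2 : ℝ) • Matrix.of (fun i j => q i * q j)
    - (2 * q0) • skew q

theorem thrust_extraction_realizes_virtual_control
    (g m fx fy fz : ℝ) (hg : 0 < g) (hm : 0 < m) (hfz : fz < g)
    (T : ℝ) (hT : T = m * Real.sqrt (fx ^ 2 + fy ^ 2 + (g - fz) ^ 2))
    (qd0 : ℝ) (hqd0 : qd0 = Real.sqrt (m * (g - fz) / (2 * T) + 1 / 2))
    (qd : Fin 3 → ℝ)
    (hqd : qd = ![m * fy / (2 * T * qd0), -(m * fx) / (2 * T * qd0), 0])
    (zI : Fin 3 → ℝ) (hzI : zI = ![0, 0, 1]) :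
    (Rmat qd qd0)ᵀ.mulVec zI = (m / T) • ![-fx, -fy, g - fz] ∧
    (g • zI - (T / m) • (Rmat qd qd0)ᵀ.mulVec zI) = ![fx, fy, fz] := by
  have hgz : 0 < g - fz := by linarith
  have hs_nonneg : (0:ℝ) ≤ fx ^ 2 + fy ^ 2 + (g - fz) ^ 2 := by positivity
  have hs_pos : (0:ℝ) < fx ^ 2 + fy ^ 2 + (g - fz) ^ 2 := by positivity
  have hTpos : 0 < T := by
    rw [hT]; exact mul_pos hm (Real.sqrt_pos.mpr hs_pos)
  have hT2 : T ^ 2 = m ^ 2 * (fx ^ 2 + fy ^ 2 + (g - fz) ^ 2) := by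
    rw [hT, mul_pow, Real.sq_sqrt hs_nonneg]
  have harg_pos : (0:ℝ) < m * (g - fz) / (2 * T) + 1 / 2 := by positivity
  have hq0pos : 0 < qd0 := by rw [hqd0]; exact Real.sqrt_pos.mpr harg_pos
  have hq0sq : qd0 ^ 2 = m * (g - fz) / (2 * T) + 1 / 2 := by
    rw [hqd0, Real.sq_sqrt harg_pos.le]
  have hq0sq2 : 2 * T * qd0 ^ 2 = m * (g - fz) + T := by
    rw [hq0sq]; field_simp
  have hTne : T ≠ 0 := ne_of_gt hTpos
  have hmne : m ≠ 0 := ne_of_gt hm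
  have hq0ne : qd0 ≠ 0 := ne_of_gt hq0pos
  have h1 : (Rmat qd qd0)ᵀ.mulVec zI = (m / T) • ![-fx, -fy, g - fz] := by
    subst hqd hzI
    funext i
    fin_cases i <;>
      simp [Rmat, skew, Matrix.mulVec, dotProduct, Fin.sum_univ_three,
        Matrix.one_apply] <;> field_simp <;> ring_nf
    · linear_combination hT2 + (2*T*qd0^2 - m*(g-fz) + T) * hq0sq2
  refine ⟨h1, ?_⟩
  rw [h1]
  subst hzI
  funext i
  fin_cases i <;> simp <;> field_simp <;> ring
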